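/- Let r₁, …, rₙ be nonnegative rational numbers, let ε₂, …, εₙ ∈ {−1, +1}, and let t = √r₁ + ε₂√r₂ + ⋯ + εₙ√rₙ. Then the field ℚ(t) is flat: for every subfield E of ℚ(t) containing ℚ, the extension E/ℚ is Galois and every field automorphism σ of E satisfies σ ∘ σ = id. -/

import Mathlib

open IntermediateField Polynomial

set_option maxHeartbeats 2000000 in
set_option synthInstance.maxHeartbeats 400000 in
/-- If `t = √r₁ ± √r₂ ± ⋯ ± √rₙ` with the `rᵢ` nonnegative rationals
(first sign `+`), then `ℚ(t)` is flat: for every subfield `E` of `ℚ(t)`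
(containing `ℚ`), the extension `E / ℚ` is Galois and every field
automorphism of `E` squares to the identity. -/
theorem adjoin_sum_sqrts_flat (n : ℕ) (hn : 0 < n) (r : Fin n → ℚ) (hr : ∀ i, 0 ≤ r i)
    (ε : Fin n → ℝ) (hε : ∀ i, ε i = 1 ∨ ε i = -1) (hε0 : ε ⟨0, hn⟩ = 1)
    (t : ℝ) (ht : t = ∑ i, ε i * Real.sqrt ((r i : ℝ))) :
    ∀ E : IntermediateField ℚ ℝ, E ≤ IntermediateField.adjoin ℚ {t} →
      IsGalois ℚ E ∧ ∀ σ : E ≃+* E, ∀ x : E, σ (σ x) = x := by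
  intro E hE
  -- the multiquadratic polynomial
  set p : ℚ[X] := ∏ i : Fin n, ((X : ℚ[X]) ^ 2 - C (r i)) with hp
  have hpm : p.Monic := monic_prod_of_monic _ _ fun i _ => monic_X_pow_sub_C (r i) two_ne_zero
  have hpne : p ≠ 0 := hpm.ne_zero
  have hsq : ∀ i, Real.sqrt (r i) ^ 2 = ((r i : ℝ)) := fun i =>
    Real.sq_sqrt (by exact_mod_cast hr i)
  have hsplits : (p.map (algebraMap ℚ ℝ)).Splits := by
    rw [hp, Polynomial.map_prod]
    apply Splits.prod
    intro i _
    have hfact : ∀ (s a : ℝ), s ^ 2 = a →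
        (X : ℝ[X]) ^ 2 - C a = (X - C s) * (X + C s) := by
      intro s a h
      rw [← h, map_pow]
      ring
    have h2 : ((X : ℚ[X]) ^ 2 - C (r i)).map (algebraMap ℚ ℝ)
        = (X - C (Real.sqrt (r i))) * (X + C (Real.sqrt (r i))) := by
      have hcast : ((algebraMap ℚ ℝ) (r i)) = ((r i : ℝ)) := by norm_num
      rw [Polynomial.map_sub, Polynomial.map_pow, map_X, map_C, hcast]
      exact hfact _ _ (hsq i)
    rw [h2]
    refine Splits.mul (Splits.X_sub_C _) ?_
    rw [show (X + C (Real.sqrt (r i))) = X - C (-(Real.sqrt (r i))) by rw [map_neg,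
      sub_neg_eq_add]]
    exact Splits.X_sub_C _
  set K : IntermediateField ℚ ℝ := IntermediateField.adjoin ℚ (p.rootSet ℝ) with hK
  haveI spl : IsSplittingField ℚ K p := adjoin_rootSet_isSplittingField hsplits
  haveI : FiniteDimensional ℚ K := IsSplittingField.finiteDimensional K p
  haveI hnorm : Normal ℚ K := Normal.of_isSplittingField p
  haveI : IsGalois ℚ K := ⟨⟩
  -- the square roots are in K
  have hroot : ∀ i, Real.sqrt (r i) ∈ p.rootSet ℝ := by
    intro i
    rw [mem_rootSet]
    refine ⟨hpne, ?_⟩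
    rw [hp, map_prod]
    apply Finset.prod_eq_zero (Finset.mem_univ i)
    simp [hsq i]
  have hsqrtK : ∀ i, Real.sqrt (r i) ∈ K := fun i =>
    IntermediateField.subset_adjoin ℚ _ (hroot i)
  have htK : t ∈ K := by
    rw [ht]
    refine K.toSubfield.sum_mem fun i _ => ?_
    rcases hε i with h | h
    · rw [h, one_mul]; exact hsqrtK i
    · rw [h, neg_one_mul]; exact K.neg_mem (hsqrtK i)
  have hEK : E ≤ K := le_trans hE (IntermediateField.adjoin_le_iff.mpr (by
    intro x hx
    rcases hx with rfl
    exact htK))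
  clear_value K
  -- every element of the Galois group of K squares to the identity
  have key : ∀ σ : K ≃ₐ[ℚ] K, ∀ x : K, σ (σ x) = x := by
    intro σ x
    have htop : Algebra.adjoin ℚ (p.rootSet K) = ⊤ := IsSplittingField.adjoin_rootSet K p
    have hx : x ∈ Algebra.adjoin ℚ (p.rootSet K) := htop ▸ Algebra.mem_top
    induction hx using Algebra.adjoin_induction with
    | mem y hy =>
      have h0 : (Polynomial.aeval y) p = 0 := (mem_rootSet.mp hy).2
      rw [hp, map_prod] at h0
      obtain ⟨i, -, hi⟩ := Finset.prod_eq_zero_iff.mp h0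
      have hy2 : y ^ 2 = algebraMap ℚ K (r i) := by
        have := hi
        simp only [map_sub, map_pow, aeval_X, aeval_C, sub_eq_zero] at this
        exact this
      have hσ : σ y ^ 2 = y ^ 2 := by
        rw [← map_pow, hy2, AlgEquiv.commutes]
      have hfac : (σ y - y) * (σ y + y) = 0 := by
        have : σ y ^ 2 - y ^ 2 = 0 := by rw [hσ, sub_self]
        linear_combination this
      rcases mul_eq_zero.mp hfac with h | h
      · have h' : σ y = y := sub_eq_zero.mp h
        rw [h', h']
      · have h' : σ y = -y := eq_neg_of_add_eq_zero_left h
        rw [h', map_neg, h', neg_neg]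
    | algebraMap q => rw [AlgEquiv.commutes, AlgEquiv.commutes]
    | add a b _ _ ha hb => rw [map_add, map_add, ha, hb]
    | mul a b _ _ ha hb => rw [map_mul, map_mul, ha, hb]
  have hsq1 : ∀ ρ : K ≃ₐ[ℚ] K, ρ * ρ = 1 := fun ρ => AlgEquiv.ext (key ρ)
  have comm : ∀ σ τ : K ≃ₐ[ℚ] K, σ * τ = τ * σ := by
    intro σ τ
    have hσ : σ⁻¹ = σ := inv_eq_of_mul_eq_one_right (hsq1 σ)
    have hτ : τ⁻¹ = τ := inv_eq_of_mul_eq_one_right (hsq1 τ)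
    calc σ * τ = (σ * τ)⁻¹ := (inv_eq_of_mul_eq_one_right (hsq1 (σ * τ))).symm
      _ = τ⁻¹ * σ⁻¹ := mul_inv_rev σ τ
      _ = τ * σ := by rw [hσ, hτ]
  -- transfer E to an intermediate field of K
  set ι : E →ₐ[ℚ] K := IntermediateField.inclusion hEK with hι
  set E₂ : IntermediateField ℚ K := ι.fieldRange with hE₂def
  have e : E ≃ₐ[ℚ] ↥E₂ := AlgEquiv.ofInjectiveField ι
  clear_value E₂
  clear_value ι
  have hE₂normal : Normal ℚ ↥E₂ := by
    refine normal_iff_forall_map_le'.mpr ?_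
    rintro σ x ⟨y, hy, rfl⟩
    rw [← IsGalois.fixedField_fixingSubgroup E₂] at hy ⊢
    exact fun g => by
      have h1 : (g : K ≃ₐ[ℚ] K) (σ y) = σ ((g : K ≃ₐ[ℚ] K) y) := by
        have := comm (g : K ≃ₐ[ℚ] K) σ
        have h2 := congrArg (fun f : K ≃ₐ[ℚ] K => f y) this
        simpa using h2
      have h3 : (g : K ≃ₐ[ℚ] K) y = y := hy g
      show (g : K ≃ₐ[ℚ] K) (σ y) = σ y
      rw [h1, h3]
  haveI : Normal ℚ ↥E₂ := hE₂normal
  haveI : FiniteDimensional ℚ ↥E₂ := inferInstance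
  haveI : FiniteDimensional ℚ E := LinearEquiv.finiteDimensional e.symm.toLinearEquiv
  haveI hEnormal : Normal ℚ E := Normal.of_algEquiv e.symm
  constructor
  · exact ⟨⟩
  · intro σ x
    -- upgrade σ to an algebra equivalence
    have hcomm : ∀ q : ℚ, σ ((algebraMap ℚ E) q) = (algebraMap ℚ E) q := by
      intro q
      rw [eq_ratCast (algebraMap ℚ E) q, map_ratCast]
    set σ' : E ≃ₐ[ℚ] E := AlgEquiv.ofRingEquiv (f := σ) hcomm with hσ'
    have hσ'app : ∀ y : E, σ' y = σ y := fun y => rfl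
    let τ₀ : ↥E₂ ≃ₐ[ℚ] ↥E₂ := (e.symm.trans σ').trans e
    set τ : K ≃ₐ[ℚ] K := τ₀.liftNormal ↥K with hτ
    have hlift : ∀ z : E₂, τ (algebraMap ↥E₂ ↥K z) = algebraMap ↥E₂ ↥K (τ₀ z) := fun z =>
      AlgEquiv.liftNormal_commutes τ₀ ↥K z
    have step : ∀ y : E, τ (algebraMap ↥E₂ ↥K (e y)) = algebraMap ↥E₂ ↥K (e (σ' y)) := by
      intro y
      rw [hlift]
      congr 1
      show e (σ' (e.symm (e y))) = e (σ' y)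
      rw [e.symm_apply_apply]
    have h1 : algebraMap ↥E₂ ↥K (e (σ' (σ' x))) = algebraMap ↥E₂ ↥K (e x) := by
      calc algebraMap ↥E₂ ↥K (e (σ' (σ' x))) = τ (algebraMap ↥E₂ ↥K (e (σ' x))) := (step (σ' x)).symm
        _ = τ (τ (algebraMap ↥E₂ ↥K (e x))) := by rw [step x]
        _ = algebraMap ↥E₂ ↥K (e x) := key τ _
    have h2 : e (σ' (σ' x)) = e x := (algebraMap ↥E₂ ↥K).injective h1
    have h3 : σ' (σ' x) = x := e.injective h2
    rw [← hσ'app, ← hσ'app]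
    exact h3
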